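/- arXiv:2111.01840 — 2 statements merged into one kernel-verified Lean document; each statement's English description precedes it below -/
import Mathlib

section
/- (First-order marginal invariance of the NNMP mixture) Suppose for each l = 1,...,L the bivariate pmf f_l on ℕ×ℕ has first marginal g and second marginal h_l, i.e., ∑_v f_l(u,v) = g(u) and ∑_u f_l(u,v) = h_l(v). If Y_2 has pmf that, conditionally on neighbor values, is given by a mixture p(u | v_1,...,v_L) = ∑_l w_l f_l(u, v_l)/h_l(v_l) with weights w_l ≥ 0 summing to 1, and each neighbor V_l has marginal pmf h_l, then marginalizing over the neighbor V_l in each component yields ∑_v (f_l(u,v)/h_l(v)) h_l(v) = g(u), so each mixture component, and hence the mixture, has marginal pmf g. -/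
theorem stmt3 (L : ℕ) (f : Fin L → ℕ → ℕ → ℝ) (hf0 : ∀ l u v, 0 ≤ f l u v)
    (hfsum : ∀ l, ∑' p : ℕ × ℕ, f l p.1 p.2 = 1)
    (g : ℕ → ℝ) (hg : ∀ l u, ∑' v, f l u v = g u)
    (h : Fin L → ℕ → ℝ) (hh : ∀ l v, h l v = ∑' u, f l u v) (hhpos : ∀ l v, 0 < h l v)
    (w : Fin L → ℝ) (hw0 : ∀ l, 0 ≤ w l) (hw1 : ∑ l, w l = 1) :
    (∀ l u, ∑' v, (f l u v / h l v) * h l v = g u) ∧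
    (∀ u, ∑ l, w l * (∑' v, (f l u v / h l v) * h l v) = g u) := by
  have key : ∀ l u, ∑' v, (f l u v / h l v) * h l v = g u := by
    intro l u
    rw [← hg l u]
    congr 1; funext v
    rw [div_mul_cancel₀ _ (hhpos l v).ne']
  refine ⟨key, fun u => ?_⟩
  simp only [key]
  rw [← Finset.sum_mul, hw1, one_mul]
end

section
/- (Stationary marginals of an NNMP over the reference sequence, by induction) Suppose Y(s_1) has pmf g, and for each i ≥ 2, conditional on the neighbor values, Y(s_i) has pmf ∑_{l=1}^{i_L} w_l(s_i) f_l(·|y(s_{(il)})), where each f_l(u|v) = f^{(l)}(u,v)/h^{(l)}(v) for a bivariate pmf f^{(l)} with first marginal g and second marginal h^{(l)} = g. Then, by induction on i, every Y(s_i) has marginal pmf g. -/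
open ENNReal

noncomputable section NNMP

/-- extend a finite tuple to a function on ℕ by zero -/
def NNMPext {k : ℕ} (z : Fin k → ℕ) (j : ℕ) : ℕ := if h : j < k then z ⟨j, h⟩ else 0

lemma NNMPext_snoc_lt {k t : ℕ} (h : t < k) (z : Fin k → ℕ) (u : ℕ) :
    NNMPext (Fin.snoc z u) t = NNMPext z t := by
  have h' : t < k + 1 := Nat.lt_succ_of_lt h
  simp [NNMPext, Fin.snoc, h, h']

lemma NNMPext_snoc_self {k : ℕ} (z : Fin k → ℕ) (u : ℕ) :
    NNMPext (Fin.snoc z u) k = u := by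
  simp [NNMPext, Fin.snoc]

lemma NNMPtsum_snoc {k : ℕ} (f : (Fin (k + 1) → ℕ) → ℝ≥0∞) :
    ∑' z, f z = ∑' (z : Fin k → ℕ), ∑' u : ℕ, f (Fin.snoc z u) := by
  rw [← (Fin.snocEquiv (fun _ => ℕ)).tsum_eq f, ENNReal.tsum_prod']
  exact ENNReal.tsum_comm

lemma NNMPfiber {α : Type*} (f : α → ℝ≥0∞) (C : ℕ → ℝ≥0∞) (t : α → ℕ) :
    ∑' z, f z * C (t z) = ∑' v, (∑' z, if t z = v then f z else 0) * C v := by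
  calc ∑' z, f z * C (t z)
      = ∑' z, ∑' v, if t z = v then f z * C v else 0 := by
        refine tsum_congr fun z => ?_
        rw [tsum_eq_single (t z) (fun b hb => if_neg fun h => hb h.symm), if_pos rfl]
    _ = ∑' v, ∑' z, if t z = v then f z * C v else 0 := ENNReal.tsum_comm
    _ = ∑' v, (∑' z, if t z = v then f z else 0) * C v := by
        refine tsum_congr fun v => ?_
        rw [← ENNReal.tsum_mul_right]
        refine tsum_congr fun z => ?_
        rw [ite_mul, zero_mul]

lemma NNMPprod_split {n : ℕ} (hn : 0 < n) (f : Fin n → ℝ≥0∞) (c : ℝ≥0∞)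
    (h0 : f ⟨0, hn⟩ = 1) :
    c * ∏ j, f j = ∏ j : Fin n, (if (j : ℕ) = 0 then c else f j) := by
  rw [← Finset.mul_prod_erase Finset.univ f (Finset.mem_univ (⟨0, hn⟩ : Fin n)), h0, one_mul,
      ← Finset.mul_prod_erase Finset.univ _ (Finset.mem_univ (⟨0, hn⟩ : Fin n)), if_pos rfl]
  congr 1
  refine Finset.prod_congr rfl fun j hj => ?_
  have hne : j ≠ ⟨0, hn⟩ := (Finset.mem_erase.mp hj).1
  exact (if_neg fun h => hne (Fin.ext h)).symm

variable (n : ℕ) (g : ℕ → ℝ) (iL : Fin n → ℕ)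
  (F : (i : Fin n) → Fin (iL i) → ℕ → ℕ → ℝ)
  (w : (i : Fin n) → Fin (iL i) → ℝ)
  (nb : (i : Fin n) → Fin (iL i) → Fin n)

def NNMPA (j u : ℕ) (z : ℕ → ℕ) : ℝ≥0∞ :=
  if h : j < n ∧ 0 < j then
    ∑ l : Fin (iL ⟨j, h.1⟩), ENNReal.ofReal (w ⟨j, h.1⟩ l) *
      (ENNReal.ofReal (F ⟨j, h.1⟩ l u (z ((nb ⟨j, h.1⟩ l : Fin n) : ℕ))) /
        ENNReal.ofReal (g (z ((nb ⟨j, h.1⟩ l : Fin n) : ℕ))))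
  else 1

def NNMPB (j : ℕ) (z : ℕ → ℕ) : ℝ≥0∞ :=
  if j = 0 then ENNReal.ofReal (g (z 0)) else NNMPA n g iL F w nb j (z j) z

def NNMPp (k : ℕ) (z : ℕ → ℕ) : ℝ≥0∞ := ∏ j ∈ Finset.range k, NNMPB n g iL F w nb j z

def NNMPT (j k m : ℕ) : ℝ≥0∞ :=
  ∑' z : Fin k → ℕ,
    if NNMPext z j = m then NNMPp n g iL F w nb k (NNMPext z) else 0

variable {n iL nb}

lemma NNMPA_congr (hnb : ∀ i l, ((nb i l : Fin n) : ℕ) < (i : ℕ)) {j u : ℕ} {z z' : ℕ → ℕ}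
    (h : ∀ t, t < j → z t = z' t) : NNMPA n g iL F w nb j u z = NNMPA n g iL F w nb j u z' := by
  unfold NNMPA
  split
  · next hc =>
    refine Finset.sum_congr rfl fun l _ => ?_
    rw [h _ (hnb ⟨j, hc.1⟩ l)]
  · rfl

lemma NNMPB_congr (hnb : ∀ i l, ((nb i l : Fin n) : ℕ) < (i : ℕ)) {j : ℕ} {z z' : ℕ → ℕ}
    (h : ∀ t, t ≤ j → z t = z' t) : NNMPB n g iL F w nb j z = NNMPB n g iL F w nb j z' := by
  unfold NNMPB
  split
  · rw [h 0 (by omega)]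
  · rw [h j le_rfl]
    exact NNMPA_congr g F w hnb fun t ht => h t ht.le

lemma NNMPp_congr (hnb : ∀ i l, ((nb i l : Fin n) : ℕ) < (i : ℕ)) {k : ℕ} {z z' : ℕ → ℕ}
    (h : ∀ t, t < k → z t = z' t) : NNMPp n g iL F w nb k z = NNMPp n g iL F w nb k z' := by
  refine Finset.prod_congr rfl fun j hj => ?_
  exact NNMPB_congr g F w hnb fun t ht => h t (lt_of_le_of_lt ht (Finset.mem_range.mp hj))

end NNMP

theorem stmt17 (n : ℕ) (g : ℕ → ℝ) (hgpos : ∀ u, 0 < g u) (hgsum : ∑' u, g u = 1)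
    (iL : Fin n → ℕ)
    (F : (i : Fin n) → Fin (iL i) → ℕ → ℕ → ℝ)
    (hF0 : ∀ i l u v, 0 ≤ F i l u v)
    (hFm1 : ∀ i l u, ∑' v, F i l u v = g u)
    (hFm2 : ∀ i l v, ∑' u, F i l u v = g v)
    (w : (i : Fin n) → Fin (iL i) → ℝ)
    (hw0 : ∀ i l, 0 ≤ w i l) (hw1 : ∀ i : Fin n, 0 < (i : ℕ) → ∑ l, w i l = 1)
    (nb : (i : Fin n) → Fin (iL i) → Fin n) (hnb : ∀ i l, (nb i l : ℕ) < (i : ℕ))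
    (P : (Fin n → ℕ) → ℝ)
    (hP : ∀ y, P y = (if h : 0 < n then g (y ⟨0, h⟩) else 1) *
      ∏ i : Fin n, (if 0 < (i : ℕ) then
        ∑ l, w i l * (F i l (y i) (y (nb i l)) / g (y (nb i l))) else 1)) :
    ∀ (i : Fin n) (m : ℕ),
      (∑' y : Fin n → ℕ, if y i = m then P y else 0) = g m := by
  intro i m
  have hn : 0 < n := i.pos
  have hGne0 : ∀ u, ENNReal.ofReal (g u) ≠ 0 := fun u => (ENNReal.ofReal_pos.mpr (hgpos u)).ne'
  have hFsummable1 : ∀ i l u, Summable (fun v => F i l u v) := by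
    intro i l u
    by_contra h
    have := hFm1 i l u
    rw [tsum_eq_zero_of_not_summable h] at this
    exact absurd this.symm (hgpos u).ne'
  have hFsummable2 : ∀ i l v, Summable (fun u => F i l u v) := by
    intro i l v
    by_contra h
    have := hFm2 i l v
    rw [tsum_eq_zero_of_not_summable h] at this
    exact absurd this.symm (hgpos v).ne'
  have hGm1 : ∀ i l u, ∑' v, ENNReal.ofReal (F i l u v) = ENNReal.ofReal (g u) := fun i l u => by
    rw [← ENNReal.ofReal_tsum_of_nonneg (fun v => hF0 i l u v) (hFsummable1 i l u), hFm1]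
  have hGm2 : ∀ i l v, ∑' u, ENNReal.ofReal (F i l u v) = ENNReal.ofReal (g v) := fun i l v => by
    rw [← ENNReal.ofReal_tsum_of_nonneg (fun u => hF0 i l u v) (hFsummable2 i l v), hFm2]
  have hWsum : ∀ (j : Fin n), 0 < (j : ℕ) → ∑ l, ENNReal.ofReal (w j l) = 1 := fun j hj => by
    rw [← ENNReal.ofReal_sum_of_nonneg (fun l _ => hw0 j l), hw1 j hj, ENNReal.ofReal_one]
  have hAsum : ∀ j, 0 < j → j < n → ∀ z : ℕ → ℕ, ∑' u, NNMPA n g iL F w nb j u z = 1 := by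
    intro j hj0 hjn z
    have hc : j < n ∧ 0 < j := ⟨hjn, hj0⟩
    simp only [NNMPA, dif_pos hc]
    rw [Summable.tsum_finsetSum (fun l _ => ENNReal.summable)]
    have hl : ∀ l : Fin (iL ⟨j, hc.1⟩), (∑' u, ENNReal.ofReal (w ⟨j, hc.1⟩ l) *
        (ENNReal.ofReal (F ⟨j, hc.1⟩ l u (z ((nb ⟨j, hc.1⟩ l : Fin n) : ℕ))) /
          ENNReal.ofReal (g (z ((nb ⟨j, hc.1⟩ l : Fin n) : ℕ)))))
        = ENNReal.ofReal (w ⟨j, hc.1⟩ l) := by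
      intro l
      rw [ENNReal.tsum_mul_left]
      simp_rw [div_eq_mul_inv]
      rw [ENNReal.tsum_mul_right, hGm2, ← div_eq_mul_inv,
        ENNReal.div_self (hGne0 _) ENNReal.ofReal_ne_top, mul_one]
    rw [Finset.sum_congr rfl fun l _ => hl l]
    exact hWsum ⟨j, hc.1⟩ hj0
  have hsplit : ∀ k, 0 < k → ∀ (z : Fin k → ℕ) (u : ℕ),
      NNMPp n g iL F w nb (k + 1) (NNMPext (Fin.snoc z u)) =
        NNMPp n g iL F w nb k (NNMPext z) * NNMPA n g iL F w nb k u (NNMPext z) := by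
    intro k hk z u
    rw [show NNMPp n g iL F w nb (k + 1) (NNMPext (Fin.snoc z u)) =
        NNMPp n g iL F w nb k (NNMPext (Fin.snoc z u)) *
          NNMPB n g iL F w nb k (NNMPext (Fin.snoc z u)) from Finset.prod_range_succ _ k]
    congr 1
    · exact NNMPp_congr g F w hnb fun t ht => NNMPext_snoc_lt ht z u
    · unfold NNMPB
      rw [if_neg hk.ne', NNMPext_snoc_self]
      exact NNMPA_congr g F w hnb fun t ht => NNMPext_snoc_lt ht z u
  have hstep : ∀ k, 0 < k → k < n → ∀ j, j < k → ∀ m',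
      NNMPT n g iL F w nb j (k + 1) m' = NNMPT n g iL F w nb j k m' := by
    intro k hk0 hkn j hjk m'
    unfold NNMPT
    rw [NNMPtsum_snoc]
    refine tsum_congr fun z => ?_
    have h1 : ∀ u : ℕ, (if NNMPext (Fin.snoc z u) j = m' then
        NNMPp n g iL F w nb (k + 1) (NNMPext (Fin.snoc z u)) else 0)
        = if NNMPext z j = m' then
            NNMPp n g iL F w nb k (NNMPext z) * NNMPA n g iL F w nb k u (NNMPext z) else 0 := by
      intro u
      rw [NNMPext_snoc_lt hjk, hsplit k hk0 z u]
    rw [tsum_congr h1]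
    by_cases h : NNMPext z j = m'
    · simp only [if_pos h]
      rw [ENNReal.tsum_mul_left, hAsum k hk0 hkn, mul_one]
    · simp [h]
  have hchain : ∀ k, k ≤ n → ∀ j, j < k → ∀ m',
      NNMPT n g iL F w nb j k m' = NNMPT n g iL F w nb j (j + 1) m' := by
    intro k
    induction k with
    | zero => exact fun _ j hj => absurd hj (Nat.not_lt_zero j)
    | succ k ih =>
      intro hkn j hjk m'
      rcases Nat.lt_or_ge j k with h | h
      · rw [hstep k (by omega) (by omega) j h m', ih (by omega) j h m']
      · have hjk' : j = k := by omega
        subst hjk'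
        rfl
  have hM : ∀ i', i' < n → ∀ m', NNMPT n g iL F w nb i' (i' + 1) m' = ENNReal.ofReal (g m') := by
    intro i'
    induction i' using Nat.strong_induction_on with
    | _ i' IH =>
      intro hin m'
      unfold NNMPT
      rw [NNMPtsum_snoc]
      by_cases hi0 : i' = 0
      · subst hi0
        have h1 : ∀ (z : Fin 0 → ℕ) (u : ℕ),
            (if NNMPext (Fin.snoc z u) 0 = m' then
              NNMPp n g iL F w nb 1 (NNMPext (Fin.snoc z u)) else 0)
            = if u = m' then ENNReal.ofReal (g u) else 0 := by
          intro z u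
          rw [NNMPext_snoc_self]
          congr 1
          rw [NNMPp, Finset.prod_range_one]
          unfold NNMPB
          rw [if_pos rfl, NNMPext_snoc_self]
        have h2 : (∑' u : ℕ, if u = m' then ENNReal.ofReal (g u) else 0)
            = ENNReal.ofReal (g m') := by
          rw [tsum_eq_single m' (fun b hb => if_neg hb), if_pos rfl]
        rw [tsum_congr fun z : Fin 0 → ℕ => by rw [tsum_congr (h1 z), h2]]
        exact tsum_eq_single (fun x => x.elim0)
          (fun b hb => absurd (funext fun x => x.elim0) hb)
      · have hi1 : 0 < i' := Nat.pos_of_ne_zero hi0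
        have hc : i' < n ∧ 0 < i' := ⟨hin, hi1⟩
        have key : ∀ z : Fin i' → ℕ,
            (∑' u : ℕ, if NNMPext (Fin.snoc z u) i' = m' then
                NNMPp n g iL F w nb (i' + 1) (NNMPext (Fin.snoc z u)) else 0)
            = NNMPp n g iL F w nb i' (NNMPext z) * NNMPA n g iL F w nb i' m' (NNMPext z) := by
          intro z
          have h1 : ∀ u : ℕ, (if NNMPext (Fin.snoc z u) i' = m' then
              NNMPp n g iL F w nb (i' + 1) (NNMPext (Fin.snoc z u)) else 0)
              = if u = m' then NNMPp n g iL F w nb i' (NNMPext z) *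
                  NNMPA n g iL F w nb i' u (NNMPext z) else 0 := by
            intro u
            rw [NNMPext_snoc_self, hsplit i' hi1 z u]
          rw [tsum_congr h1, tsum_eq_single m' (fun b hb => if_neg hb), if_pos rfl]
        rw [tsum_congr key]
        have hAexp : ∀ z : Fin i' → ℕ, NNMPA n g iL F w nb i' m' (NNMPext z) =
            ∑ l : Fin (iL ⟨i', hc.1⟩), ENNReal.ofReal (w ⟨i', hc.1⟩ l) *
              (ENNReal.ofReal (F ⟨i', hc.1⟩ l m' (NNMPext z ((nb ⟨i', hc.1⟩ l : Fin n) : ℕ))) /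
                ENNReal.ofReal (g (NNMPext z ((nb ⟨i', hc.1⟩ l : Fin n) : ℕ)))) :=
          fun z => dif_pos hc
        calc (∑' z : Fin i' → ℕ,
                NNMPp n g iL F w nb i' (NNMPext z) * NNMPA n g iL F w nb i' m' (NNMPext z))
            = ∑' z : Fin i' → ℕ, ∑ l : Fin (iL ⟨i', hc.1⟩),
                ENNReal.ofReal (w ⟨i', hc.1⟩ l) * (NNMPp n g iL F w nb i' (NNMPext z) *
                  (ENNReal.ofReal (F ⟨i', hc.1⟩ l m' (NNMPext z ((nb ⟨i', hc.1⟩ l : Fin n) : ℕ))) /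
                    ENNReal.ofReal (g (NNMPext z ((nb ⟨i', hc.1⟩ l : Fin n) : ℕ))))) := by
              refine tsum_congr fun z => ?_
              rw [hAexp z, Finset.mul_sum]
              exact Finset.sum_congr rfl fun l _ => by ring
          _ = ∑ l : Fin (iL ⟨i', hc.1⟩), ENNReal.ofReal (w ⟨i', hc.1⟩ l) *
                ∑' z : Fin i' → ℕ, NNMPp n g iL F w nb i' (NNMPext z) *
                  (ENNReal.ofReal (F ⟨i', hc.1⟩ l m' (NNMPext z ((nb ⟨i', hc.1⟩ l : Fin n) : ℕ))) /
                    ENNReal.ofReal (g (NNMPext z ((nb ⟨i', hc.1⟩ l : Fin n) : ℕ)))) := by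
              rw [Summable.tsum_finsetSum (fun l _ => ENNReal.summable)]
              exact Finset.sum_congr rfl fun l _ => ENNReal.tsum_mul_left
          _ = ∑ l : Fin (iL ⟨i', hc.1⟩), ENNReal.ofReal (w ⟨i', hc.1⟩ l) *
                ENNReal.ofReal (g m') := by
              refine Finset.sum_congr rfl fun l _ => ?_
              congr 1
              rw [NNMPfiber (fun z : Fin i' → ℕ => NNMPp n g iL F w nb i' (NNMPext z))
                (fun v => ENNReal.ofReal (F ⟨i', hc.1⟩ l m' v) / ENNReal.ofReal (g v))
                (fun z => NNMPext z ((nb ⟨i', hc.1⟩ l : Fin n) : ℕ))]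
              have hν : ((nb ⟨i', hc.1⟩ l : Fin n) : ℕ) < i' := hnb ⟨i', hc.1⟩ l
              have hT : ∀ v, (∑' z : Fin i' → ℕ,
                  if NNMPext z ((nb ⟨i', hc.1⟩ l : Fin n) : ℕ) = v
                  then NNMPp n g iL F w nb i' (NNMPext z) else 0) = ENNReal.ofReal (g v) := by
                intro v
                rw [show (∑' z : Fin i' → ℕ,
                    if NNMPext z ((nb ⟨i', hc.1⟩ l : Fin n) : ℕ) = v
                    then NNMPp n g iL F w nb i' (NNMPext z) else 0)
                  = NNMPT n g iL F w nb ((nb ⟨i', hc.1⟩ l : Fin n) : ℕ) i' v from rfl]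
                rw [hchain i' (le_of_lt hin) _ hν v]
                exact IH _ hν (lt_trans hν hin) v
              rw [tsum_congr fun v => by rw [hT v]]
              have hcancel : ∀ v : ℕ, ENNReal.ofReal (g v) *
                  (ENNReal.ofReal (F ⟨i', hc.1⟩ l m' v) / ENNReal.ofReal (g v))
                  = ENNReal.ofReal (F ⟨i', hc.1⟩ l m' v) := by
                intro v
                rw [mul_comm]
                exact ENNReal.div_mul_cancel (hGne0 _) ENNReal.ofReal_ne_top
              rw [tsum_congr hcancel, hGm1]
          _ = ENNReal.ofReal (g m') := by
              rw [← Finset.sum_mul, hWsum ⟨i', hc.1⟩ hi1, one_mul]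
  have hfac_nn : ∀ (y : Fin n → ℕ) (j : Fin n), 0 ≤ (if 0 < (j : ℕ) then
      ∑ l, w j l * (F j l (y j) (y (nb j l)) / g (y (nb j l))) else 1) := by
    intro y j
    split_ifs
    · exact Finset.sum_nonneg fun l _ =>
        mul_nonneg (hw0 j l) (div_nonneg (hF0 j l _ _) (hgpos _).le)
    · exact zero_le_one
  have hPnn : ∀ y, 0 ≤ P y := by
    intro y
    rw [hP y]
    refine mul_nonneg ?_ (Finset.prod_nonneg fun j _ => hfac_nn y j)
    split_ifs <;> simp [(hgpos _).le]
  have hext : ∀ (y : Fin n → ℕ) (j : Fin n), NNMPext y (j : ℕ) = y j := by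
    intro y j
    simp [NNMPext, j.isLt]
  have hkey : ∀ y : Fin n → ℕ, ENNReal.ofReal (P y) = NNMPp n g iL F w nb n (NNMPext y) := by
    intro y
    rw [hP y, dif_pos hn, ENNReal.ofReal_mul (hgpos _).le,
      ENNReal.ofReal_prod_of_nonneg (fun j _ => hfac_nn y j)]
    rw [NNMPp, ← Fin.prod_univ_eq_prod_range (fun j => NNMPB n g iL F w nb j (NNMPext y)) n]
    have hB : ∀ j : Fin n, NNMPB n g iL F w nb (j : ℕ) (NNMPext y)
        = if (j : ℕ) = 0 then ENNReal.ofReal (g (y ⟨0, hn⟩))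
          else ENNReal.ofReal (if 0 < (j : ℕ) then
            ∑ l, w j l * (F j l (y j) (y (nb j l)) / g (y (nb j l))) else 1) := by
      intro j
      unfold NNMPB
      by_cases h0 : (j : ℕ) = 0
      · rw [if_pos h0, if_pos h0,
          show NNMPext y 0 = y ⟨0, hn⟩ from by simp [NNMPext, hn]]
      · have hj : 0 < (j : ℕ) := Nat.pos_of_ne_zero h0
        rw [if_neg h0, if_neg h0, if_pos hj]
        unfold NNMPA
        rw [dif_pos (⟨j.isLt, hj⟩ : (j : ℕ) < n ∧ 0 < (j : ℕ))]
        rw [ENNReal.ofReal_sum_of_nonneg (fun l _ =>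
          mul_nonneg (hw0 j l) (div_nonneg (hF0 j l _ _) (hgpos _).le))]
        simp only [Fin.eta]
        refine Finset.sum_congr rfl fun l _ => ?_
        rw [hext y j, hext y (nb j l), ENNReal.ofReal_mul (hw0 j l),
          ENNReal.ofReal_div_of_pos (hgpos _)]
    rw [Finset.prod_congr rfl fun j _ => hB j]
    refine NNMPprod_split hn _ _ ?_
    rw [if_neg (lt_irrefl 0), ENNReal.ofReal_one]
  have hENN : (∑' y : Fin n → ℕ, ENNReal.ofReal (if y i = m then P y else 0))
      = ENNReal.ofReal (g m) := by
    have hy : ∀ y : Fin n → ℕ, ENNReal.ofReal (if y i = m then P y else 0)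
        = if NNMPext y (i : ℕ) = m then NNMPp n g iL F w nb n (NNMPext y) else 0 := by
      intro y
      rw [hext y i]
      split_ifs
      · exact hkey y
      · exact ENNReal.ofReal_zero
    rw [tsum_congr hy]
    rw [show (∑' y : Fin n → ℕ, if NNMPext y (i : ℕ) = m
        then NNMPp n g iL F w nb n (NNMPext y) else 0)
      = NNMPT n g iL F w nb (i : ℕ) n m from rfl]
    rw [hchain n le_rfl (i : ℕ) i.isLt m]
    exact hM (i : ℕ) i.isLt m
  calc (∑' y : Fin n → ℕ, if y i = m then P y else 0)
      = ∑' y : Fin n → ℕ, (ENNReal.ofReal (if y i = m then P y else 0)).toReal := by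
        refine tsum_congr fun y => ?_
        rw [ENNReal.toReal_ofReal]
        split_ifs
        exacts [hPnn y, le_rfl]
    _ = (∑' y : Fin n → ℕ, ENNReal.ofReal (if y i = m then P y else 0)).toReal :=
        (ENNReal.tsum_toReal_eq fun _ => ENNReal.ofReal_ne_top).symm
    _ = g m := by rw [hENN, ENNReal.toReal_ofReal (hgpos m).le]
end
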